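/- arXiv:2002.08856 — 3 statements merged into one kernel-verified Lean document; each statement's English description precedes it below -/
import Mathlib

section
/- Let (V_t)_{t≥1}, (U_t)_{t≥1} be nonnegative adapted sequences with V_1 ≤ β, V_t ≤ α V_{t-1} + U_{t-1} for t ≥ 2, and E[U_t | F_{t-1}] ≤ β, where α ∈ [0,1) and β ≥ 0. Let τ be a stopping time bounded by a constant n. Then E[∑_{t=1}^{τ} V_t] ≤ (β/(1−α)) · (E[τ] + 1). -/
open MeasureTheory Finset

private lemma geom_bound_aux {α : ℝ} (h0 : 0 ≤ α) (h1 : α < 1) (m : ℕ) :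
    ∑ k ∈ Finset.range m, α ^ k ≤ 1 / (1 - α) := by
  have hc : (0 : ℝ) < 1 - α := by linarith
  rw [geom_sum_eq (by intro h; rw [h] at h1; exact lt_irrefl 1 h1)]
  have h2 : (α ^ m - 1) / (α - 1) = (1 - α ^ m) / (1 - α) := by
    rw [← neg_div_neg_eq, neg_sub, neg_sub]
  rw [h2]
  have hp := pow_nonneg h0 m
  exact div_le_div_of_nonneg_right (by linarith) hc.le

private lemma stopped_sum_eq_aux {Ω : Type*} (τ : Ω → ℕ) (n : ℕ) (hbdd : ∀ ω, τ ω ≤ n)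
    (W : ℕ → Ω → ℝ) (ω : Ω) :
    ∑ i ∈ Finset.range n, ({ω' | i + 1 ≤ τ ω'}).indicator (W (i + 1)) ω
      = ∑ j ∈ Finset.range (τ ω), W (j + 1) ω := by
  have h1 : ∑ i ∈ Finset.range (τ ω), ({ω' | i + 1 ≤ τ ω'}).indicator (W (i + 1)) ω
      = ∑ i ∈ Finset.range n, ({ω' | i + 1 ≤ τ ω'}).indicator (W (i + 1)) ω := by
    apply Finset.sum_subset (Finset.range_subset_range.mpr (hbdd ω))
    intro i _ hni
    rw [Finset.mem_range, not_lt] at hni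
    exact Set.indicator_of_notMem (by simp only [Set.mem_setOf_eq]; omega) _
  rw [← h1]
  apply Finset.sum_congr rfl
  intro j hj
  rw [Set.indicator_of_mem]
  exact Finset.mem_range.mp hj

theorem drift_condition_stopped_sum_bound
    {Ω : Type*} {m0 : MeasurableSpace Ω} (μ : Measure Ω) [IsProbabilityMeasure μ]
    (ℱ : Filtration ℕ m0)
    (V U : ℕ → Ω → ℝ)
    (hVnonneg : ∀ t ω, 0 ≤ V t ω) (hUnonneg : ∀ t ω, 0 ≤ U t ω)
    (hVmeas : ∀ t, StronglyMeasurable[ℱ t] (V t))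
    (hUmeas : ∀ t, StronglyMeasurable[ℱ t] (U t))
    (hVint : ∀ t, Integrable (V t) μ) (hUint : ∀ t, Integrable (U t) μ)
    (α β : ℝ) (hα0 : 0 ≤ α) (hα1 : α < 1) (hβ : 0 ≤ β)
    (hV1 : ∀ᵐ ω ∂μ, V 1 ω ≤ β)
    (hdrift : ∀ t, 2 ≤ t → ∀ᵐ ω ∂μ, V t ω ≤ α * V (t - 1) ω + U (t - 1) ω)
    (hU : ∀ t, 1 ≤ t → ∀ᵐ ω ∂μ, (μ[U t|ℱ (t - 1)]) ω ≤ β)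
    (τ : Ω → ℕ) (hτ : IsStoppingTime ℱ (fun ω => (τ ω : WithTop ℕ)))
    (n : ℕ) (hbdd : ∀ ω, τ ω ≤ n) :
    ∫ ω, (∑ t ∈ Finset.Icc 1 (τ ω), V t ω) ∂μ
      ≤ (β / (1 - α)) * ((∫ ω, (τ ω : ℝ) ∂μ) + 1) := by
  have hc : (0 : ℝ) < 1 - α := by linarith
  set A : ℕ → Set Ω := fun i => {ω' | i + 1 ≤ τ ω'} with hA_def
  -- measurability of A i
  have hA : ∀ i, MeasurableSet[ℱ i] (A i) := by
    intro i
    have : A i = {ω' | τ ω' ≤ i}ᶜ := by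
      ext ω'; show i + 1 ≤ τ ω' ↔ ¬ (τ ω' ≤ i); rw [not_le]; exact Nat.add_one_le_iff
    rw [this]
    exact (by simpa using hτ.measurableSet_le i : MeasurableSet[ℱ i] {ω' | τ ω' ≤ i}).compl
  have hA0 : ∀ i, MeasurableSet (A i) := fun i => ℱ.le i _ (hA i)
  -- general stopped-sum identity
  have hstop : ∀ (W : ℕ → Ω → ℝ) (ω : Ω),
      ∑ i ∈ Finset.range n, (A i).indicator (W (i + 1)) ω
        = ∑ j ∈ Finset.range (τ ω), W (j + 1) ω :=
    fun W ω => stopped_sum_eq_aux τ n hbdd W ω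
  -- step 1: a.e. recursive bound
  have hbound : ∀ j : ℕ, ∀ᵐ ω ∂μ,
      V (j + 1) ω ≤ β * α ^ j + ∑ k ∈ Finset.range j, α ^ k * U (j - k) ω := by
    intro j
    induction j with
    | zero => filter_upwards [hV1] with ω h; simpa using h
    | succ j ih =>
      filter_upwards [ih, hdrift (j + 2) (by omega)] with ω h1 h2
      have h2' : V (j + 2) ω ≤ α * V (j + 1) ω + U (j + 1) ω := h2
      have hS : α * ∑ k ∈ Finset.range j, α ^ k * U (j - k) ω
          = ∑ k ∈ Finset.range j, α ^ (k + 1) * U (j - k) ω := by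
        rw [Finset.mul_sum]
        exact Finset.sum_congr rfl fun k _ => by ring
      have h3 : α * V (j + 1) ω
          ≤ α * (β * α ^ j + ∑ k ∈ Finset.range j, α ^ k * U (j - k) ω) :=
        mul_le_mul_of_nonneg_left h1 hα0
      have h4 : ∑ k ∈ Finset.range (j + 1), α ^ k * U (j + 1 - k) ω
          = (∑ k ∈ Finset.range j, α ^ (k + 1) * U (j - k) ω) + U (j + 1) ω := by
        rw [Finset.sum_range_succ']
        simp [Nat.succ_sub_succ]
      show V (j + 1 + 1) ω ≤ β * α ^ (j + 1) + ∑ k ∈ Finset.range (j + 1), α ^ k * U (j + 1 - k) ω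
      rw [h4]
      have : V (j + 2) ω ≤ α * (β * α ^ j + ∑ k ∈ Finset.range j, α ^ k * U (j - k) ω)
          + U (j + 1) ω := le_trans h2' (by linarith)
      calc V (j + 1 + 1) ω = V (j + 2) ω := by norm_num
        _ ≤ α * (β * α ^ j + ∑ k ∈ Finset.range j, α ^ k * U (j - k) ω) + U (j + 1) ω := this
        _ = β * α ^ (j + 1) + ((∑ k ∈ Finset.range j, α ^ (k + 1) * U (j - k) ω) + U (j + 1) ω) := by
            rw [mul_add, hS]; ring
  have hbd : ∀ᵐ ω ∂μ, ∀ j : ℕ,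
      V (j + 1) ω ≤ β * α ^ j + ∑ k ∈ Finset.range j, α ^ k * U (j - k) ω :=
    (MeasureTheory.ae_all_iff).mpr hbound
  -- step 2: a.e. pointwise bound on the stopped sum
  have hae : ∀ᵐ ω ∂μ,
      ∑ i ∈ Finset.range n, (A i).indicator (V (i + 1)) ω
        ≤ β / (1 - α) + (1 / (1 - α)) * ∑ i ∈ Finset.range n, (A i).indicator (U (i + 1)) ω := by
    filter_upwards [hbd] with ω hω
    set T := τ ω with hT
    -- double sum bound
    have e1 : ∀ j : ℕ, ∑ k ∈ Finset.range j, α ^ k * U (j - k) ω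
        = ∑ s ∈ Finset.range j, α ^ (j - 1 - s) * U (s + 1) ω := by
      intro j
      rw [← Finset.sum_range_reflect (fun k => α ^ k * U (j - k) ω) j]
      apply Finset.sum_congr rfl
      intro s hs
      rw [Finset.mem_range] at hs
      have h5 : j - (j - 1 - s) = s + 1 := by omega
      rw [h5]
    have e2 : ∑ j ∈ Finset.range T, ∑ s ∈ Finset.range j, α ^ (j - 1 - s) * U (s + 1) ω
        = ∑ s ∈ Finset.range T, ∑ j ∈ Finset.Ico (s + 1) T, α ^ (j - 1 - s) * U (s + 1) ω := by
      simp only [Finset.range_eq_Ico]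
      exact (Finset.sum_Ico_Ico_comm' 0 T (fun s j => α ^ (j - 1 - s) * U (s + 1) ω)).symm
    have e3 : ∀ s : ℕ, ∑ j ∈ Finset.Ico (s + 1) T, α ^ (j - 1 - s) ≤ 1 / (1 - α) := by
      intro s
      rw [Finset.sum_Ico_eq_sum_range]
      calc ∑ k ∈ Finset.range (T - (s + 1)), α ^ (s + 1 + k - 1 - s)
          = ∑ k ∈ Finset.range (T - (s + 1)), α ^ k :=
            Finset.sum_congr rfl fun k _ => by congr 1; omega
        _ ≤ 1 / (1 - α) := geom_bound_aux hα0 hα1 _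
    have Dbound : ∑ j ∈ Finset.range T, ∑ k ∈ Finset.range j, α ^ k * U (j - k) ω
        ≤ (1 / (1 - α)) * ∑ s ∈ Finset.range T, U (s + 1) ω := by
      calc ∑ j ∈ Finset.range T, ∑ k ∈ Finset.range j, α ^ k * U (j - k) ω
          = ∑ j ∈ Finset.range T, ∑ s ∈ Finset.range j, α ^ (j - 1 - s) * U (s + 1) ω :=
            Finset.sum_congr rfl fun j _ => e1 j
        _ = ∑ s ∈ Finset.range T, ∑ j ∈ Finset.Ico (s + 1) T, α ^ (j - 1 - s) * U (s + 1) ω := e2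
        _ = ∑ s ∈ Finset.range T, (∑ j ∈ Finset.Ico (s + 1) T, α ^ (j - 1 - s)) * U (s + 1) ω :=
            Finset.sum_congr rfl fun s _ => by rw [Finset.sum_mul]
        _ ≤ ∑ s ∈ Finset.range T, (1 / (1 - α)) * U (s + 1) ω :=
            Finset.sum_le_sum fun s _ => mul_le_mul_of_nonneg_right (e3 s) (hUnonneg _ ω)
        _ = (1 / (1 - α)) * ∑ s ∈ Finset.range T, U (s + 1) ω := by rw [Finset.mul_sum]
    calc ∑ i ∈ Finset.range n, (A i).indicator (V (i + 1)) ω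
        = ∑ j ∈ Finset.range T, V (j + 1) ω := hstop V ω
      _ ≤ ∑ j ∈ Finset.range T, (β * α ^ j + ∑ k ∈ Finset.range j, α ^ k * U (j - k) ω) :=
          Finset.sum_le_sum fun j _ => hω j
      _ = β * (∑ j ∈ Finset.range T, α ^ j)
          + ∑ j ∈ Finset.range T, ∑ k ∈ Finset.range j, α ^ k * U (j - k) ω := by
          rw [Finset.sum_add_distrib, Finset.mul_sum]
      _ ≤ β * (1 / (1 - α)) + (1 / (1 - α)) * ∑ s ∈ Finset.range T, U (s + 1) ω :=
          add_le_add (mul_le_mul_of_nonneg_left (geom_bound_aux hα0 hα1 T) hβ) Dbound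
      _ = β / (1 - α) + (1 / (1 - α)) * ∑ i ∈ Finset.range n, (A i).indicator (U (i + 1)) ω := by
          rw [hstop U ω]; ring
  -- integrability
  have hVind : ∀ i, Integrable ((A i).indicator (V (i + 1))) μ :=
    fun i => (hVint (i + 1)).indicator (hA0 i)
  have hUind : ∀ i, Integrable ((A i).indicator (U (i + 1))) μ :=
    fun i => (hUint (i + 1)).indicator (hA0 i)
  have hIind : ∀ i, Integrable ((A i).indicator (fun _ => (1 : ℝ))) μ :=
    fun i => (integrable_const (1 : ℝ)).indicator (hA0 i)
  have hGint : Integrable (fun ω => β / (1 - α)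
      + (1 / (1 - α)) * ∑ i ∈ Finset.range n, (A i).indicator (U (i + 1)) ω) μ :=
    (integrable_const _).add
      ((integrable_finset_sum _ (fun i _ => hUind i)).const_mul _)
  -- rewrite the LHS integrand
  have hrw : (fun ω => ∑ t ∈ Finset.Icc 1 (τ ω), V t ω)
      = fun ω => ∑ i ∈ Finset.range n, (A i).indicator (V (i + 1)) ω := by
    funext ω
    rw [hstop V ω, ← Finset.Ico_add_one_right_eq_Icc, Finset.sum_Ico_eq_sum_range]
    simp [add_comm]
  -- conditional expectation bound
  have key : ∀ i, ∫ ω, (A i).indicator (U (i + 1)) ω ∂μ ≤ β * (μ (A i)).toReal := by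
    intro i
    rw [integral_indicator (hA0 i)]
    have h1 : ∫ ω in A i, U (i + 1) ω ∂μ = ∫ ω in A i, (μ[U (i + 1)|ℱ i]) ω ∂μ :=
      (setIntegral_condExp (ℱ.le i) (hUint (i + 1)) (hA i)).symm
    have hU' : ∀ᵐ ω ∂μ, (μ[U (i + 1)|ℱ i]) ω ≤ β := by
      have := hU (i + 1) (by omega)
      simpa using this
    have h2 : ∫ ω in A i, (μ[U (i + 1)|ℱ i]) ω ∂μ ≤ ∫ ω in A i, β ∂μ := by
      apply setIntegral_mono_ae integrable_condExp.integrableOn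
        (integrable_const β).integrableOn
      exact hU'
    rw [h1]
    calc ∫ ω in A i, (μ[U (i + 1)|ℱ i]) ω ∂μ ≤ ∫ ω in A i, β ∂μ := h2
      _ = (μ (A i)).toReal * β := by rw [setIntegral_const]; rw [smul_eq_mul]; rfl
      _ = β * (μ (A i)).toReal := mul_comm _ _
  -- the expectation of τ
  have hτint : ∫ ω, (τ ω : ℝ) ∂μ = ∑ i ∈ Finset.range n, (μ (A i)).toReal := by
    have hfun : (fun ω => (τ ω : ℝ))
        = fun ω => ∑ i ∈ Finset.range n, (A i).indicator (fun _ => (1 : ℝ)) ω := by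
      funext ω
      rw [hstop (fun _ _ => (1 : ℝ)) ω]
      simp
    rw [hfun, integral_finset_sum _ (fun i _ => hIind i)]
    apply Finset.sum_congr rfl
    intro i _
    rw [integral_indicator (hA0 i), setIntegral_const, smul_eq_mul, mul_one]
    rfl
  -- assembly
  calc ∫ ω, (∑ t ∈ Finset.Icc 1 (τ ω), V t ω) ∂μ
      = ∫ ω, ∑ i ∈ Finset.range n, (A i).indicator (V (i + 1)) ω ∂μ := by rw [hrw]
    _ ≤ ∫ ω, (β / (1 - α)
        + (1 / (1 - α)) * ∑ i ∈ Finset.range n, (A i).indicator (U (i + 1)) ω) ∂μ :=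
        integral_mono_ae (integrable_finset_sum _ fun i _ => hVind i) hGint hae
    _ = β / (1 - α)
        + (1 / (1 - α)) * ∑ i ∈ Finset.range n, ∫ ω, (A i).indicator (U (i + 1)) ω ∂μ := by
        rw [integral_add (integrable_const _)
          ((integrable_finset_sum _ (fun i _ => hUind i)).const_mul _),
          integral_const, integral_const_mul,
          integral_finset_sum _ (fun i _ => hUind i)]
        simp
    _ ≤ β / (1 - α) + (1 / (1 - α)) * ∑ i ∈ Finset.range n, β * (μ (A i)).toReal := by
        have hsum : ∑ i ∈ Finset.range n, ∫ ω, (A i).indicator (U (i + 1)) ω ∂μ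
            ≤ ∑ i ∈ Finset.range n, β * (μ (A i)).toReal :=
          Finset.sum_le_sum fun i _ => key i
        have hpos : (0 : ℝ) ≤ 1 / (1 - α) := by positivity
        nlinarith [mul_le_mul_of_nonneg_left hsum hpos]
    _ = β / (1 - α) + (1 / (1 - α)) * (β * ∑ i ∈ Finset.range n, (μ (A i)).toReal) := by
        simp only [Finset.mul_sum]
    _ = (β / (1 - α)) * ((∫ ω, (τ ω : ℝ) ∂μ) + 1) := by
        rw [hτint]; ring
end

section
/- Suppose f : ℝ^d → ℝ is differentiable, bounded below by f*, with L-Lipschitz gradient. Consider SGD iterates x_{t+1} = x_t − η(∇f(x_t) + δ_t), where the noise δ_t is a martingale difference with E[δ_t | F_{t-1}] = 0 and E[‖δ_t‖² | F_{t-1}] ≤ σ². Let m ≥ 1, ε > 0, and τ(ε) = inf{ n ≥ 1 : n ≡ 1 (mod m) and ‖∇f(x_n)‖² ≤ ε }. If L = 2 and η < ε/(mσ² + ε), setting η = c·ε/(mσ² + ε) for c ∈ (0,1), then E[τ(ε)] ≤ (f(x_1) − f*)m²σ²/(ε²c(1−c)) + O(m/ε). -/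
open MeasureTheory Finset ENNReal

lemma sgd_coord_abs_le_norm {d : ℕ} (u : EuclideanSpace ℝ (Fin d)) (i : Fin d) :
    |u i| ≤ ‖u‖ := by
  have h1 : ‖u‖ = Real.sqrt (∑ j, u j ^ 2) := by
    rw [EuclideanSpace.norm_eq]
    congr 1
    exact Finset.sum_congr rfl fun j _ => by rw [Real.norm_eq_abs, sq_abs]
  rw [h1]
  have h2 : u i ^ 2 ≤ ∑ j, u j ^ 2 :=
    Finset.single_le_sum (f := fun j => u j ^ 2) (fun j _ => sq_nonneg _) (Finset.mem_univ i)
  calc |u i| = Real.sqrt ((u i) ^ 2) := (Real.sqrt_sq_eq_abs _).symm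
    _ ≤ _ := Real.sqrt_le_sqrt h2

lemma sgd_descent_lemma {d : ℕ} (f : EuclideanSpace ℝ (Fin d) → ℝ)
    (f' : EuclideanSpace ℝ (Fin d) → EuclideanSpace ℝ (Fin d))
    (hgrad : ∀ x, HasGradientAt f (f' x) x)
    (hLip : ∀ x₁ x₂, ‖f' x₁ - f' x₂‖ ≤ 2 * ‖x₁ - x₂‖) (a b : EuclideanSpace ℝ (Fin d)) :
    f b ≤ f a + inner ℝ (f' a) (b - a) + ‖b - a‖ ^ 2 := by
  set v := b - a with hv
  set φ : ℝ → ℝ := fun s => f (a + s • v) - s * inner ℝ (f' a) v - s ^ 2 * ‖v‖ ^ 2 with hφ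
  have hline : ∀ s : ℝ, HasDerivAt (fun s : ℝ => a + s • v) v s := by
    intro s
    simpa using ((hasDerivAt_id s).smul_const v).const_add a
  have hfd : ∀ s : ℝ, HasDerivAt (fun s => f (a + s • v))
      (inner ℝ (f' (a + s • v)) v) s := by
    intro s
    have h1 := (hgrad (a + s • v)).hasFDerivAt
    have := h1.comp_hasDerivAt s (hline s)
    simp at this; exact this
  have hφd : ∀ s : ℝ, HasDerivAt φ
      ((inner ℝ (f' (a + s • v)) v : ℝ) - inner ℝ (f' a) v - 2 * s * ‖v‖ ^ 2) s := by
    intro s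
    have h2 : HasDerivAt (fun s : ℝ => s * (inner ℝ (f' a) v : ℝ)) (inner ℝ (f' a) v) s := by
      simpa using (hasDerivAt_id s).mul_const (inner ℝ (f' a) v : ℝ)
    have h3 : HasDerivAt (fun s : ℝ => s ^ 2 * ‖v‖ ^ 2) (2 * s * ‖v‖ ^ 2) s := by
      simpa [mul_comm] using (hasDerivAt_pow 2 s).mul_const (‖v‖ ^ 2)
    exact ((hfd s).sub h2).sub h3
  have hanti : AntitoneOn φ (Set.Icc 0 1) := by
    apply antitoneOn_of_deriv_nonpos (convex_Icc (0:ℝ) 1)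
    · exact fun s _ => ((hφd s).continuousAt).continuousWithinAt
    · exact fun s _ => ((hφd s).differentiableAt).differentiableWithinAt
    · intro s hs
      rw [interior_Icc] at hs
      rw [(hφd s).deriv]
      have hb : (inner ℝ (f' (a + s • v)) v : ℝ) - inner ℝ (f' a) v ≤ 2 * s * ‖v‖ ^ 2 := by
        have h1 : (inner ℝ (f' (a + s • v)) v : ℝ) - inner ℝ (f' a) v
            = inner ℝ (f' (a + s • v) - f' a) v := by rw [inner_sub_left]
        rw [h1]
        calc (inner ℝ (f' (a + s • v) - f' a) v : ℝ) ≤ ‖f' (a + s • v) - f' a‖ * ‖v‖ :=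
              real_inner_le_norm _ _
          _ ≤ (2 * ‖a + s • v - a‖) * ‖v‖ := by
              gcongr; exact hLip _ _
          _ = 2 * s * ‖v‖ ^ 2 := by
              simp [norm_smul, abs_of_pos hs.1]; ring
      linarith
  have h01 := hanti (Set.left_mem_Icc.2 zero_le_one) (Set.right_mem_Icc.2 zero_le_one) zero_le_one
  simp only [hφ, zero_smul, add_zero, zero_mul, one_smul, one_mul, sub_zero, zero_pow,
    one_pow] at h01
  have : a + v = b := by rw [hv]; abel
  rw [this] at h01
  linarith

set_option maxHeartbeats 2000000 in
theorem sgd_early_stopping_expected_time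
    {Ω : Type*} {m0 : MeasurableSpace Ω} (μ : Measure Ω) [IsProbabilityMeasure μ]
    (ℱ : Filtration ℕ m0)
    {d : ℕ} (f : EuclideanSpace ℝ (Fin d) → ℝ)
    (f' : EuclideanSpace ℝ (Fin d) → EuclideanSpace ℝ (Fin d))
    (hgrad : ∀ x, HasGradientAt f (f' x) x)
    (hLip : ∀ x₁ x₂, ‖f' x₁ - f' x₂‖ ≤ 2 * ‖x₁ - x₂‖)  -- L = 2
    (fstar : ℝ) (hlb : ∀ x, fstar ≤ f x)
    (σ : ℝ) (hσ : 0 < σ) (m : ℕ) (hm : 1 ≤ m) (ε : ℝ) (hε : 0 < ε)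
    (c : ℝ) (hc0 : 0 < c) (hc1 : c < 1)
    (η : ℝ) (hη : η = c * ε / (m * σ ^ 2 + ε))
    (x δ : ℕ → Ω → EuclideanSpace ℝ (Fin d))
    (x₁ : EuclideanSpace ℝ (Fin d)) (hinit : x 1 = fun _ => x₁)
    (hrec : ∀ t, 1 ≤ t → x (t + 1) = fun ω => x t ω - η • (f' (x t ω) + δ t ω))
    (hxmeas : ∀ t, 1 ≤ t → StronglyMeasurable[ℱ (t - 1)] (x t))
    (hδmeas : ∀ t, StronglyMeasurable[ℱ t] (δ t))
    (hδint : ∀ t, Integrable (δ t) μ)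
    (hδint2 : ∀ t, Integrable (fun ω => ‖δ t ω‖ ^ 2) μ)
    (hmart : ∀ t, 1 ≤ t → μ[δ t|ℱ (t - 1)] =ᵐ[μ] 0)
    (hvar : ∀ t, 1 ≤ t → ∀ᵐ ω ∂μ, (μ[fun ω' => ‖δ t ω'‖ ^ 2|ℱ (t - 1)]) ω ≤ σ ^ 2)
    (τ : Ω → ℕ∞)
    (hτ : ∀ ω, τ ω = sInf {n : ℕ∞ | ∃ k : ℕ, n = k ∧ 1 ≤ k ∧ k % m = 1 % m ∧
        ‖f' (x k ω)‖ ^ 2 ≤ ε}) :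
    ∫⁻ ω, (τ ω : ℝ≥0∞) ∂μ
      ≤ ENNReal.ofReal ((f x₁ - fstar) * m ^ 2 * σ ^ 2 / (ε ^ 2 * c * (1 - c))
          + (f x₁ - fstar) * m / (c * (1 - c) * ε) + 1 / (1 - c)) := by
  have hden : 0 < (m:ℝ) * σ ^ 2 + ε := by positivity
  have hη0 : 0 < η := by rw [hη]; positivity
  have hkey : η * ((m:ℝ) * σ ^ 2 + ε) = c * ε := by
    rw [hη]; field_simp
  have hη1 : η < 1 := by
    nlinarith [mul_pos hη0 hden, hε, hσ, sq_nonneg σ, hc1,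
      mul_pos hε (sub_pos.2 hc1)]
  set e : ℝ := η * ε * (1 - c) with he
  have he0 : 0 < e := by
    apply mul_pos (mul_pos hη0 hε); linarith
  have hF₁ : 0 ≤ f x₁ - fstar := sub_nonneg.2 (hlb x₁)
  have hf'cont : Continuous f' := by
    refine LipschitzWith.continuous (K := 2) (LipschitzWith.of_dist_le_mul fun a b => ?_)
    simpa [dist_eq_norm] using hLip a b
  have hfcont : Continuous f :=
    continuous_iff_continuousAt.2 fun z => (hgrad z).differentiableAt.continuousAt
  have hxsm : ∀ t, 1 ≤ t → StronglyMeasurable (x t) :=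
    fun t ht => (hxmeas t ht).mono (ℱ.le _)
  have hδsm : ∀ t, StronglyMeasurable (δ t) := fun t => (hδmeas t).mono (ℱ.le _)
  set D : ℕ → Ω → ℝ := fun t ω => 1 + ∑ s ∈ range t, ‖δ s ω‖ ^ 2 with hD
  have hDint : ∀ t, Integrable (D t) μ := fun t =>
    (integrable_const 1).add (integrable_finset_sum _ fun s _ => hδint2 s)
  have hD1 : ∀ t ω, 1 ≤ D t ω := by
    intro t ω
    have : (0:ℝ) ≤ ∑ s ∈ range t, ‖δ s ω‖ ^ 2 :=
      Finset.sum_nonneg fun s _ => by positivity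
    simp only [hD]; linarith
  have hDmono : ∀ s t, s ≤ t → ∀ ω, D s ω ≤ D t ω := by
    intro s t hst ω
    simp only [hD]
    have := Finset.sum_le_sum_of_subset_of_nonneg (Finset.range_subset_range.2 hst)
      (fun i _ _ => by positivity : ∀ i ∈ range t, i ∉ range s → (0:ℝ) ≤ ‖δ i ω‖ ^ 2)
    linarith
  have hDnn : ∀ t ω, 0 ≤ D t ω := fun t ω => le_trans zero_le_one (hD1 t ω)
  have hδD : ∀ t ω, ‖δ t ω‖ ^ 2 ≤ D (t+1) ω := by
    intro t ω
    simp only [hD]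
    have h1 : ‖δ t ω‖ ^ 2 ≤ ∑ s ∈ range (t+1), ‖δ s ω‖ ^ 2 :=
      Finset.single_le_sum (f := fun s => ‖δ s ω‖ ^ 2) (fun s _ => by positivity)
        (Finset.self_mem_range_succ t)
    linarith
  have hdescent : ∀ a b, f b ≤ f a + inner ℝ (f' a) (b - a) + ‖b - a‖ ^ 2 :=
    sgd_descent_lemma f f' hgrad hLip
  have hxb : ∀ t, 1 ≤ t → ∃ C : ℝ, 0 ≤ C ∧ ∀ ω, ‖x t ω - x₁‖ ^ 2 ≤ C * D t ω := by
    intro t ht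
    induction t, ht using Nat.le_induction with
    | base =>
      refine ⟨0, le_rfl, fun ω => ?_⟩
      simp [hinit]
    | succ t ht ih =>
      obtain ⟨C, hC0, hC⟩ := ih
      refine ⟨3*((1+2*η)^2*C + η^2*‖f' x₁‖^2 + η^2), by positivity, fun ω => ?_⟩
      have hx : x (t+1) ω - x₁ = (x t ω - x₁) - η • (f' (x t ω) + δ t ω) := by
        simp only [hrec t ht]; abel
      have hgb : ‖f' (x t ω)‖ ≤ ‖f' x₁‖ + 2 * ‖x t ω - x₁‖ := by
        have h1 := norm_sub_norm_le (f' (x t ω)) (f' x₁)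
        have h2 := hLip (x t ω) x₁
        linarith
      have hnorm : ‖x (t+1) ω - x₁‖ ≤
          (1+2*η)*‖x t ω - x₁‖ + η*‖f' x₁‖ + η*‖δ t ω‖ := by
        rw [hx]
        calc ‖(x t ω - x₁) - η • (f' (x t ω) + δ t ω)‖
            ≤ ‖x t ω - x₁‖ + ‖η • (f' (x t ω) + δ t ω)‖ := norm_sub_le _ _
          _ = ‖x t ω - x₁‖ + η * ‖f' (x t ω) + δ t ω‖ := by
              rw [norm_smul, Real.norm_of_nonneg hη0.le]
          _ ≤ ‖x t ω - x₁‖ + η * (‖f' (x t ω)‖ + ‖δ t ω‖) := by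
              gcongr; exact norm_add_le _ _
          _ ≤ _ := by nlinarith [norm_nonneg (x t ω - x₁)]
      set u := ‖x t ω - x₁‖ with hu
      set a := ‖f' x₁‖ with haa
      set b := ‖δ t ω‖ with hbb
      have hu0 : (0:ℝ) ≤ u := norm_nonneg _
      have ha0 : (0:ℝ) ≤ a := norm_nonneg _
      have hb0 : (0:ℝ) ≤ b := norm_nonneg _
      have hw : ‖x (t+1) ω - x₁‖ ^ 2 ≤ ((1+2*η)*u + η*a + η*b)^2 :=
        pow_le_pow_left₀ (norm_nonneg _) hnorm 2
      have h3 : ((1+2*η)*u + η*a + η*b)^2 ≤ 3*((1+2*η)^2*u^2 + η^2*a^2 + η^2*b^2) := by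
        nlinarith [sq_nonneg ((1+2*η)*u - η*a), sq_nonneg ((1+2*η)*u - η*b),
          sq_nonneg (η*a - η*b)]
      have hu2 : u^2 ≤ C * D (t+1) ω := by
        have h4 := hDmono t (t+1) (Nat.le_succ t) ω
        have h5 := hC ω
        nlinarith
      have hb2 : b^2 ≤ D (t+1) ω := hδD t ω
      have h1D : (1:ℝ) ≤ D (t+1) ω := hD1 _ ω
      have e1 : 3*(1+2*η)^2*u^2 ≤ 3*(1+2*η)^2*(C * D (t+1) ω) := by nlinarith [sq_nonneg (1+2*η)]
      have e2 : η^2*a^2 ≤ η^2*a^2 * D (t+1) ω := le_mul_of_one_le_right (by positivity) h1D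
      have e3 : η^2*b^2 ≤ η^2 * D (t+1) ω := by nlinarith [sq_nonneg η]
      nlinarith
  have hdom : ∀ t, 1 ≤ t → ∃ C : ℝ, 0 ≤ C ∧ ∀ ω,
      |f (x t ω) - fstar| + ‖f' (x t ω)‖ ^ 2 + ‖f' (x t ω)‖ * ‖δ t ω‖ ≤ C * D (t+1) ω := by
    intro t ht
    obtain ⟨C, hC0, hC⟩ := hxb t ht
    refine ⟨(f x₁ - fstar) + 4*‖f' x₁‖^2 + 14*C + 2, by positivity, fun ω => ?_⟩
    set u := ‖x t ω - x₁‖ with hu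
    set a := ‖f' x₁‖ with haa
    set b := ‖δ t ω‖ with hbb
    set g := ‖f' (x t ω)‖ with hgg
    have hu0 : (0:ℝ) ≤ u := norm_nonneg _
    have ha0 : (0:ℝ) ≤ a := norm_nonneg _
    have hb0 : (0:ℝ) ≤ b := norm_nonneg _
    have hg0 : (0:ℝ) ≤ g := norm_nonneg _
    have hu2 : u^2 ≤ C * D (t+1) ω := by
      have h4 := hDmono t (t+1) (Nat.le_succ t) ω
      have h5 := hC ω
      nlinarith
    have hb2 : b^2 ≤ D (t+1) ω := hδD t ω
    have h1D : (1:ℝ) ≤ D (t+1) ω := hD1 _ ω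
    have hgb : g ≤ a + 2 * u := by
      have h1 := norm_sub_norm_le (f' (x t ω)) (f' x₁)
      have h2 := hLip (x t ω) x₁
      simp only [hu, haa, hgg] at *
      linarith
    have habs : |f (x t ω) - fstar| = f (x t ω) - fstar :=
      abs_of_nonneg (sub_nonneg.2 (hlb _))
    have hfU : f (x t ω) - fstar ≤ (f x₁ - fstar) + a*u + u^2 := by
      have h1 := hdescent x₁ (x t ω)
      have h2 : (inner ℝ (f' x₁) (x t ω - x₁) : ℝ) ≤ a * u :=
        (real_inner_le_norm _ _)
      linarith
    have h2 : g^2 ≤ 2*a^2 + 8*u^2 := by nlinarith [sq_nonneg (a - 2*u)]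
    have h3 : g * b ≤ (g^2 + b^2)/2 := by nlinarith [sq_nonneg (g-b)]
    have h4 : a*u ≤ (a^2+u^2)/2 := by nlinarith [sq_nonneg (a-u)]
    have h5 : (f x₁ - fstar) + 3.5*a^2 ≤ ((f x₁ - fstar) + 3.5*a^2) * D (t+1) ω :=
      le_mul_of_one_le_right (by positivity) h1D
    rw [habs]
    nlinarith
  -- integrability
  have hFsm : ∀ t, 1 ≤ t → StronglyMeasurable (fun ω => f (x t ω) - fstar) :=
    fun t ht => (hfcont.comp_stronglyMeasurable (hxsm t ht)).sub stronglyMeasurable_const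
  have hGsm : ∀ t, 1 ≤ t → StronglyMeasurable (fun ω => ‖f' (x t ω)‖ ^ 2) :=
    fun t ht => ((hf'cont.norm.pow 2).comp_stronglyMeasurable (hxsm t ht))
  have hgδsm : ∀ t, 1 ≤ t → StronglyMeasurable (fun ω => ‖f' (x t ω)‖ * ‖δ t ω‖) :=
    fun t ht => ((hf'cont.norm.comp_stronglyMeasurable (hxsm t ht)).mul (hδsm t).norm)
  have hIsm : ∀ t, 1 ≤ t →
      StronglyMeasurable (fun ω => (inner ℝ (f' (x t ω)) (δ t ω) : ℝ)) :=
    fun t ht => continuous_inner.comp_stronglyMeasurable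
      ((hf'cont.comp_stronglyMeasurable (hxsm t ht)).prodMk (hδsm t))
  have hFint : ∀ t, 1 ≤ t → Integrable (fun ω => f (x t ω) - fstar) μ := by
    intro t ht
    obtain ⟨C, hC0, hC⟩ := hdom t ht
    refine Integrable.mono' ((hDint (t+1)).const_mul C)
      (hFsm t ht).aestronglyMeasurable (Filter.Eventually.of_forall fun ω => ?_)
    have h1 := hC ω
    have h2 : (0:ℝ) ≤ ‖f' (x t ω)‖ ^ 2 := by positivity
    have h3 : (0:ℝ) ≤ ‖f' (x t ω)‖ * ‖δ t ω‖ := by positivity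
    rw [Real.norm_eq_abs]; linarith
  have hGint : ∀ t, 1 ≤ t → Integrable (fun ω => ‖f' (x t ω)‖ ^ 2) μ := by
    intro t ht
    obtain ⟨C, hC0, hC⟩ := hdom t ht
    refine Integrable.mono' ((hDint (t+1)).const_mul C)
      (hGsm t ht).aestronglyMeasurable (Filter.Eventually.of_forall fun ω => ?_)
    have h1 := hC ω
    have h3 : (0:ℝ) ≤ ‖f' (x t ω)‖ * ‖δ t ω‖ := by positivity
    have h4 : (0:ℝ) ≤ |f (x t ω) - fstar| := abs_nonneg _
    rw [Real.norm_eq_abs, abs_of_nonneg (by positivity : (0:ℝ) ≤ ‖f' (x t ω)‖ ^ 2)]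
    linarith
  have hgδint : ∀ t, 1 ≤ t → Integrable (fun ω => ‖f' (x t ω)‖ * ‖δ t ω‖) μ := by
    intro t ht
    obtain ⟨C, hC0, hC⟩ := hdom t ht
    refine Integrable.mono' ((hDint (t+1)).const_mul C)
      (hgδsm t ht).aestronglyMeasurable (Filter.Eventually.of_forall fun ω => ?_)
    have h1 := hC ω
    have h2 : (0:ℝ) ≤ ‖f' (x t ω)‖ ^ 2 := by positivity
    have h4 : (0:ℝ) ≤ |f (x t ω) - fstar| := abs_nonneg _
    rw [Real.norm_eq_abs, abs_of_nonneg (by positivity : (0:ℝ) ≤ ‖f' (x t ω)‖ * ‖δ t ω‖)]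
    linarith
  have hIint : ∀ t, 1 ≤ t → Integrable (fun ω => (inner ℝ (f' (x t ω)) (δ t ω) : ℝ)) μ := by
    intro t ht
    refine Integrable.mono' (hgδint t ht)
      (hIsm t ht).aestronglyMeasurable (Filter.Eventually.of_forall fun ω => ?_)
    rw [Real.norm_eq_abs]
    exact abs_real_inner_le_norm _ _
  have hzero : ∀ t, 1 ≤ t → ∀ B : Set Ω, MeasurableSet[ℱ (t-1)] B →
      ∫ ω in B, (inner ℝ (f' (x t ω)) (δ t ω) : ℝ) ∂μ = 0 := by
    intro t ht B hB
    have hmle : ℱ (t-1) ≤ m0 := ℱ.le _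
    have hBm : MeasurableSet B := hmle _ hB
    have hδi_int : ∀ i : Fin d, Integrable (fun ω => δ t ω i) μ := by
      intro i
      simpa using (EuclideanSpace.proj (𝕜 := ℝ) i).integrable_comp (hδint t)
    have hcoord : ∀ i : Fin d, μ[fun ω => δ t ω i|ℱ (t-1)] =ᵐ[μ] 0 := by
      intro i
      refine (ae_eq_condExp_of_forall_setIntegral_eq hmle (hδi_int i)
        (fun s _ _ => (integrable_zero _ _ _).integrableOn)
        (fun s hs hμs => ?_) stronglyMeasurable_zero.aestronglyMeasurable).symm
      have h1 : ∫ ω in s, δ t ω ∂μ = 0 := by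
        rw [← setIntegral_condExp hmle (hδint t) hs]
        rw [integral_congr_ae (ae_restrict_of_ae (hmart t ht))]
        simp
      have h2 : ∫ ω in s, δ t ω i ∂μ = 0 := by
        have h3 := (EuclideanSpace.proj (𝕜 := ℝ) i).integral_comp_comm
          ((hδint t).integrableOn (s := s))
        have h4 : ∀ ω, (EuclideanSpace.proj (𝕜 := ℝ) i) (δ t ω) = δ t ω i := fun ω => rfl
        simp only [h4] at h3
        rw [h3, h1]
        simp
      rw [h2]
      simp
    have hfsm : ∀ i : Fin d, StronglyMeasurable[ℱ (t-1)] (fun ω => f' (x t ω) i) :=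
      fun i => ((EuclideanSpace.proj (𝕜 := ℝ) i).continuous.comp
        hf'cont).comp_stronglyMeasurable (hxmeas t ht)
    have hδism : ∀ i : Fin d, StronglyMeasurable (fun ω => δ t ω i) :=
      fun i => (EuclideanSpace.proj (𝕜 := ℝ) i).continuous.comp_stronglyMeasurable (hδsm t)
    have hterm_bd : ∀ i : Fin d, ∀ ω, |f' (x t ω) i * δ t ω i|
        ≤ ‖f' (x t ω)‖ * ‖δ t ω‖ := by
      intro i ω
      rw [abs_mul]
      exact mul_le_mul (sgd_coord_abs_le_norm _ i) (sgd_coord_abs_le_norm _ i)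
        (abs_nonneg _) (norm_nonneg _)
    have hterm_int : ∀ i : Fin d, Integrable (fun ω => f' (x t ω) i * δ t ω i) μ := by
      intro i
      refine Integrable.mono' (hgδint t ht)
        ((((hfsm i).mono hmle).mul (hδism i)).aestronglyMeasurable)
        (Filter.Eventually.of_forall fun ω => ?_)
      rw [Real.norm_eq_abs]
      exact hterm_bd i ω
    have hrepr : ∀ ω, (inner ℝ (f' (x t ω)) (δ t ω) : ℝ)
        = ∑ i : Fin d, f' (x t ω) i * δ t ω i := by
      intro ω
      rw [PiLp.inner_apply]
      exact Finset.sum_congr rfl fun i _ => by simp [RCLike.inner_apply, mul_comm]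
    rw [setIntegral_congr_fun hBm (fun ω _ => hrepr ω),
      integral_finset_sum _ (fun i _ => (hterm_int i).integrableOn)]
    refine Finset.sum_eq_zero fun i _ => ?_
    set h : Ω → ℝ := B.indicator (fun ω => f' (x t ω) i) with hh
    have hsm_h : StronglyMeasurable[ℱ (t-1)] h := (hfsm i).indicator hB
    have hind_int : Integrable (fun ω => h ω * δ t ω i) μ := by
      refine Integrable.mono' (hgδint t ht)
        (((hsm_h.mono hmle).mul (hδism i)).aestronglyMeasurable)
        (Filter.Eventually.of_forall fun ω => ?_)
      rw [Real.norm_eq_abs]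
      by_cases hω : ω ∈ B
      · simp only [hh, Set.indicator_of_mem hω]
        exact hterm_bd i ω
      · simp only [hh, Set.indicator_of_notMem hω, zero_mul, abs_zero]
        positivity
    have hre : ∫ ω in B, f' (x t ω) i * δ t ω i ∂μ = ∫ ω, h ω * δ t ω i ∂μ := by
      rw [← integral_indicator hBm]
      congr 1
      funext ω
      by_cases hω : ω ∈ B <;>
        simp [hh, hω, Set.indicator_of_mem, Set.indicator_of_notMem]
    have hind_int' : Integrable (h * fun ω => δ t ω i) μ := hind_int
    have hcm := condExp_mul_of_stronglyMeasurable_left (μ := μ) hsm_h hind_int' (hδi_int i)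
    have hz : (h * μ[fun ω => δ t ω i|ℱ (t-1)]) =ᵐ[μ] 0 :=
      (hcoord i).mono fun ω hω => by
        simp only [Pi.mul_apply, Pi.zero_apply] at hω ⊢
        rw [hω, mul_zero]
    have hfin : ∫ ω, h ω * δ t ω i ∂μ = 0 := by
      rw [show (fun ω => h ω * δ t ω i) = (h * fun ω => δ t ω i) from rfl,
        ← integral_condExp hmle]
      rw [integral_congr_ae (hcm.trans hz)]; simp
    rw [hre, hfin]
  have hnoise : ∀ t, 1 ≤ t → ∀ B : Set Ω, MeasurableSet[ℱ (t-1)] B →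
      ∫ ω in B, ‖δ t ω‖ ^ 2 ∂μ ≤ σ ^ 2 * (μ B).toReal := by
    intro t ht B hB
    have hmle : ℱ (t-1) ≤ m0 := ℱ.le _
    calc ∫ ω in B, ‖δ t ω‖ ^ 2 ∂μ
        = ∫ ω in B, (μ[fun ω' => ‖δ t ω'‖ ^ 2|ℱ (t-1)]) ω ∂μ :=
          (setIntegral_condExp hmle (hδint2 t) hB).symm
      _ ≤ ∫ _ω in B, σ ^ 2 ∂μ := by
          refine integral_mono_ae integrable_condExp.integrableOn
            (integrableOn_const)
            (ae_restrict_of_ae (hvar t ht))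
      _ = σ ^ 2 * (μ B).toReal := by
          rw [setIntegral_const, smul_eq_mul, mul_comm, measureReal_def]
  have hpt : ∀ t, 1 ≤ t → ∀ ω, f (x (t+1) ω) - fstar ≤ (f (x t ω) - fstar)
      - η*(1-η)*‖f' (x t ω)‖ ^ 2 + (2*η^2 - η) * inner ℝ (f' (x t ω)) (δ t ω)
      + η^2*‖δ t ω‖ ^ 2 := by
    intro t ht ω
    have hb := hdescent (x t ω) (x (t+1) ω)
    have hdiff : x (t+1) ω - x t ω = -(η • (f' (x t ω) + δ t ω)) := by
      simp only [hrec t ht]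
      abel
    rw [hdiff] at hb
    have h1 : (inner ℝ (f' (x t ω)) (-(η • (f' (x t ω) + δ t ω))) : ℝ)
        = -η * (‖f' (x t ω)‖^2 + inner ℝ (f' (x t ω)) (δ t ω)) := by
      rw [inner_neg_right, real_inner_smul_right, inner_add_right,
        real_inner_self_eq_norm_sq]
      ring
    have h2 : ‖-(η • (f' (x t ω) + δ t ω))‖^2
        = η^2 * (‖f' (x t ω)‖^2 + 2*inner ℝ (f' (x t ω)) (δ t ω) + ‖δ t ω‖^2) := by
      rw [norm_neg, norm_smul, mul_pow, norm_add_sq_real, Real.norm_eq_abs, sq_abs]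
    rw [h1, h2] at hb
    nlinarith [hb]
  have hstep : ∀ t, 1 ≤ t → ∀ B : Set Ω, MeasurableSet[ℱ (t-1)] B →
      ∫ ω in B, (f (x (t+1) ω) - fstar) ∂μ ≤ ∫ ω in B, (f (x t ω) - fstar) ∂μ
        - η*(1-η) * ∫ ω in B, ‖f' (x t ω)‖ ^ 2 ∂μ + η^2*σ^2*(μ B).toReal := by
    intro t ht B hB
    have hBm : MeasurableSet B := ℱ.le _ _ hB
    have hIF := (hFint t ht).integrableOn (s := B)
    have hIG := ((hGint t ht).const_mul (η*(1-η))).integrableOn (s := B)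
    have hII := ((hIint t ht).const_mul (2*η^2-η)).integrableOn (s := B)
    have hIN := ((hδint2 t).const_mul (η^2)).integrableOn (s := B)
    have h1 : ∫ ω in B, (f (x (t+1) ω) - fstar) ∂μ ≤
        ∫ ω in B, ((f (x t ω) - fstar) - η*(1-η)*‖f' (x t ω)‖ ^ 2
          + (2*η^2-η)*(inner ℝ (f' (x t ω)) (δ t ω) : ℝ) + η^2*‖δ t ω‖ ^ 2) ∂μ :=
      setIntegral_mono ((hFint (t+1) (ht.trans (Nat.le_succ t))).integrableOn)
        (by exact ((hIF.sub hIG).add hII).add hIN) (hpt t ht)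
    have h2 : ∫ ω in B, ((f (x t ω) - fstar) - η*(1-η)*‖f' (x t ω)‖ ^ 2
          + (2*η^2-η)*(inner ℝ (f' (x t ω)) (δ t ω) : ℝ) + η^2*‖δ t ω‖ ^ 2) ∂μ
        = ∫ ω in B, (f (x t ω) - fstar) ∂μ - η*(1-η) * ∫ ω in B, ‖f' (x t ω)‖ ^ 2 ∂μ
          + (2*η^2-η) * ∫ ω in B, (inner ℝ (f' (x t ω)) (δ t ω) : ℝ) ∂μ
          + η^2 * ∫ ω in B, ‖δ t ω‖ ^ 2 ∂μ := by
      have hI12 : IntegrableOn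
          (fun ω => (f (x t ω) - fstar) - η*(1-η)*‖f' (x t ω)‖ ^ 2) B μ := hIF.sub hIG
      have hI123 : IntegrableOn
          (fun ω => (f (x t ω) - fstar) - η*(1-η)*‖f' (x t ω)‖ ^ 2
            + (2*η^2-η)*(inner ℝ (f' (x t ω)) (δ t ω) : ℝ)) B μ := hI12.add hII
      rw [integral_add hI123 hIN, integral_add hI12 hII, integral_sub hIF hIG,
        integral_const_mul, integral_const_mul, integral_const_mul]
    have h3 := hzero t ht B hB
    have h4 := hnoise t ht B hB
    rw [h2, h3, mul_zero] at h1
    have h5 : η^2 * ∫ ω in B, ‖δ t ω‖ ^ 2 ∂μ ≤ η^2 * (σ^2 * (μ B).toReal) :=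
      mul_le_mul_of_nonneg_left h4 (sq_nonneg η)
    nlinarith [h1, h5]
  set A : ℕ → Set Ω := fun k =>
    {ω | ∀ j, 1 ≤ j → j ≤ k*m+1 → j % m = 1 % m → ε < ‖f' (x j ω)‖ ^ 2} with hA
  have hAmeas : ∀ k, MeasurableSet[ℱ (k*m)] (A k) := by
    intro k
    have hset : A k = ⋂ j : ℕ,
        {ω | 1 ≤ j → j ≤ k*m+1 → j % m = 1 % m → ε < ‖f' (x j ω)‖ ^ 2} := by
      ext ω
      simp only [hA, Set.mem_setOf_eq, Set.mem_iInter]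
    rw [hset]
    refine MeasurableSet.iInter fun j => ?_
    by_cases h1 : 1 ≤ j ∧ j ≤ k*m+1 ∧ j % m = 1 % m
    · obtain ⟨h1a, h1b, h1c⟩ := h1
      have hset2 : {ω | 1 ≤ j → j ≤ k*m+1 → j % m = 1 % m → ε < ‖f' (x j ω)‖ ^ 2}
          = (x j) ⁻¹' {y | ε < ‖f' y‖ ^ 2} := by
        ext ω
        simp [h1a, h1b, h1c]
      rw [hset2]
      have hopen : MeasurableSet {y : EuclideanSpace ℝ (Fin d) | ε < ‖f' y‖ ^ 2} :=
        (isOpen_lt continuous_const (hf'cont.norm.pow 2)).measurableSet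
      have hjm : j - 1 ≤ k*m := by omega
      exact ((hxmeas j h1a).mono (ℱ.mono hjm)).measurable hopen
    · have hset2 : {ω | 1 ≤ j → j ≤ k*m+1 → j % m = 1 % m → ε < ‖f' (x j ω)‖ ^ 2}
          = Set.univ := by
        ext ω
        simp only [Set.mem_setOf_eq, Set.mem_univ, iff_true]
        intro ha hb hc
        exact absurd ⟨ha, hb, hc⟩ h1
      rw [hset2]
      exact MeasurableSet.univ
  have hAmeasC : ∀ k, MeasurableSet (A k) := fun k => (ℱ.le _) _ (hAmeas k)
  have hAanti : ∀ k, A (k+1) ⊆ A k := by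
    intro k ω hω j hj1 hj2 hj3
    exact hω j hj1 (hj2.trans (by nlinarith [hm])) hj3
  have hAcp : ∀ k ω, ω ∈ A k → ε < ‖f' (x (k*m+1) ω)‖ ^ 2 := by
    intro k ω hω
    exact hω _ (Nat.le_add_left 1 _) le_rfl (by rw [Nat.add_comm]; exact Nat.add_mul_mod_self_right 1 k m)
  have hblock : ∀ K, ∫ ω in A K, (f (x (K*m+1+m) ω) - fstar) ∂μ ≤
      ∫ ω in A K, (f (x (K*m+1) ω) - fstar) ∂μ - e * (μ (A K)).toReal := by
    intro K
    have hT1 : 1 ≤ K*m+1 := Nat.le_add_left 1 _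
    have hAK : ∀ j : ℕ, MeasurableSet[ℱ (K*m+1+j-1)] (A K) := by
      intro j
      exact ℱ.mono (by omega) _ (hAmeas K)
    have key : ∀ j, 1 ≤ j → j ≤ m →
        ∫ ω in A K, (f (x (K*m+1+j) ω) - fstar) ∂μ ≤
        ∫ ω in A K, (f (x (K*m+1) ω) - fstar) ∂μ
        - η*(1-η)*ε*(μ (A K)).toReal + j*(η^2*σ^2*(μ (A K)).toReal) := by
      intro j hj1 hjm
      induction j with
      | zero => omega
      | succ j ih =>
        rcases Nat.eq_zero_or_pos j with hj0 | hjpos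
        · subst hj0
          have hs := hstep (K*m+1) hT1 (A K) (by simpa using hAK 0)
          have hGlb : ε * (μ (A K)).toReal ≤ ∫ ω in A K, ‖f' (x (K*m+1) ω)‖ ^ 2 ∂μ := by
            have h6 := setIntegral_mono_on
              (integrableOn_const)
              ((hGint _ hT1).integrableOn) (hAmeasC K)
              (fun ω hω => (hAcp K ω hω).le)
            rw [setIntegral_const, smul_eq_mul, mul_comm] at h6
            exact h6
          have h7 : η*(1-η) * (ε * (μ (A K)).toReal)
              ≤ η*(1-η) * ∫ ω in A K, ‖f' (x (K*m+1) ω)‖ ^ 2 ∂μ :=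
            mul_le_mul_of_nonneg_left hGlb (by nlinarith)
          push_cast
          nlinarith [hs, h7]
        · have ih2 := ih hjpos (by omega)
          have hs := hstep (K*m+1+j) (by omega) (A K) (hAK j)
          have hGnn : 0 ≤ ∫ ω in A K, ‖f' (x (K*m+1+j) ω)‖ ^ 2 ∂μ :=
            setIntegral_nonneg (hAmeasC K) (fun ω _ => by positivity)
          have h8 : 0 ≤ η*(1-η) * ∫ ω in A K, ‖f' (x (K*m+1+j) ω)‖ ^ 2 ∂μ :=
            mul_nonneg (by nlinarith) hGnn
          have hidx : K*m+1+j+1 = K*m+1+(j+1) := by omega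
          rw [hidx] at hs
          push_cast
          push_cast at ih2
          nlinarith [hs, ih2, h8]
    have hkeym := key m hm le_rfl
    have halg : η*(1-η)*ε - m*(η^2*σ^2) = e := by
      rw [he]
      linear_combination (-η) * hkey
    have hμnn : (0:ℝ) ≤ (μ (A K)).toReal := ENNReal.toReal_nonneg
    nlinarith [hkeym]
  have hmain : ∀ K, ∫ ω in A K, (f (x (K*m+1) ω) - fstar) ∂μ
      + e * ∑ k ∈ range K, (μ (A k)).toReal ≤ f x₁ - fstar := by
    intro K
    induction K with
    | zero =>
      simp only [Finset.range_zero, Finset.sum_empty, mul_zero, add_zero,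
        Nat.zero_mul, Nat.zero_add]
      simp only [hinit]
      rw [setIntegral_const, smul_eq_mul]
      have h1 : (μ (A 0)).toReal ≤ 1 := by
        have h2 : μ (A 0) ≤ 1 := prob_le_one
        calc (μ (A 0)).toReal ≤ (1:ℝ≥0∞).toReal :=
              ENNReal.toReal_mono one_ne_top h2
          _ = 1 := by simp
      rw [measureReal_def]
      nlinarith [ENNReal.toReal_nonneg (a := μ (A 0))]
    | succ K ih =>
      have h1 : ∫ ω in A (K+1), (f (x ((K+1)*m+1) ω) - fstar) ∂μ
          ≤ ∫ ω in A K, (f (x ((K+1)*m+1) ω) - fstar) ∂μ := by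
        refine setIntegral_mono_set ((hFint _ (by omega)).integrableOn)
          (Filter.Eventually.of_forall fun ω => sub_nonneg.2 (hlb _))
          (Filter.Eventually.of_forall (hAanti K))
      have hidx : (K+1)*m+1 = K*m+1+m := by ring_nf
      rw [hidx] at h1
      have h2 := hblock K
      rw [Finset.sum_range_succ, mul_add]
      have h3 : 0 ≤ (μ (A (K+1))).toReal := ENNReal.toReal_nonneg
      have hgoalidx : (K+1)*m+1 = K*m+1+m := by ring_nf
      rw [hgoalidx]
      linarith [h1, h2, ih]
  have htsum : ∑' k, μ (A k) ≤ ENNReal.ofReal ((f x₁ - fstar) / e) := by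
    have hsumK : ∀ K, ∑ k ∈ range K, μ (A k) ≤ ENNReal.ofReal ((f x₁ - fstar) / e) := by
      intro K
      have h1 : ∑ k ∈ range K, (μ (A k)).toReal ≤ (f x₁ - fstar)/e := by
        have h2 := hmain K
        have h3 : 0 ≤ ∫ ω in A K, (f (x (K*m+1) ω) - fstar) ∂μ :=
          setIntegral_nonneg (hAmeasC K) (fun ω _ => sub_nonneg.2 (hlb _))
        rw [le_div_iff₀ he0]
        nlinarith [h2, h3]
      calc ∑ k ∈ range K, μ (A k)
          = ENNReal.ofReal (∑ k ∈ range K, (μ (A k)).toReal) := by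
            rw [ENNReal.ofReal_sum_of_nonneg (fun _ _ => ENNReal.toReal_nonneg)]
            exact Finset.sum_congr rfl fun k _ =>
              (ENNReal.ofReal_toReal (measure_ne_top μ _)).symm
        _ ≤ ENNReal.ofReal ((f x₁ - fstar)/e) := ENNReal.ofReal_le_ofReal h1
    rw [ENNReal.tsum_eq_iSup_sum' _ Finset.exists_nat_subset_range]
    exact iSup_le hsumK
  have hτle : ∀ ω, (τ ω : ℝ≥0∞) ≤
      1 + m * ∑' k, (A k).indicator (fun _ => (1:ℝ≥0∞)) ω := by
    intro ω
    classical
    by_cases hall : ∀ k, ω ∈ A k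
    · have h1 : ∑' k, (A k).indicator (fun _ => (1:ℝ≥0∞)) ω = ∑' _k : ℕ, (1:ℝ≥0∞) :=
        tsum_congr fun k => by simp [Set.indicator_of_mem (hall k)]
      rw [h1, ENNReal.tsum_const_eq_top_of_ne_zero one_ne_zero]
      have hm0 : (m:ℝ≥0∞) ≠ 0 := by
        simp only [ne_eq, Nat.cast_eq_zero]
        omega
      rw [ENNReal.mul_top hm0]
      exact le_top
    · push_neg at hall
      set k₀ := Nat.find hall with hk₀
      have hspec : ω ∉ A k₀ := Nat.find_spec hall
      have hex : ∃ j, 1 ≤ j ∧ j ≤ k₀*m+1 ∧ j % m = 1 % m ∧ ‖f' (x j ω)‖ ^ 2 ≤ ε := by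
        simp only [hA, Set.mem_setOf_eq] at hspec
        push_neg at hspec
        exact hspec
      obtain ⟨j, hj1, hj2, hj3, hj4⟩ := hex
      have hτj : τ ω ≤ (j : ℕ∞) := by
        rw [hτ ω]
        exact sInf_le ⟨j, rfl, hj1, hj3, hj4⟩
      have hmin : ∀ k < k₀, ω ∈ A k := fun k hk => not_not.1 (Nat.find_min hall hk)
      have hlow : (k₀:ℝ≥0∞) ≤ ∑' k, (A k).indicator (fun _ => (1:ℝ≥0∞)) ω := by
        have h5 : ∑ k ∈ range k₀, (A k).indicator (fun _ => (1:ℝ≥0∞)) ω = k₀ := by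
          have h5a : ∀ k ∈ range k₀, (A k).indicator (fun _ => (1:ℝ≥0∞)) ω = 1 :=
            fun k hk => by simp [Set.indicator_of_mem (hmin k (Finset.mem_range.1 hk))]
          rw [Finset.sum_congr rfl h5a]
          simp
        rw [← h5]
        exact ENNReal.sum_le_tsum _
      have hcast : (τ ω : ℝ≥0∞) ≤ ((k₀*m+1 : ℕ) : ℝ≥0∞) := by
        have h6 : τ ω ≤ ((k₀*m+1 : ℕ) : ℕ∞) := hτj.trans (by exact_mod_cast hj2)
        have h7 := ENat.toENNReal_le.2 h6
        simpa using h7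
      calc (τ ω : ℝ≥0∞) ≤ ((k₀*m+1 : ℕ) : ℝ≥0∞) := hcast
        _ = 1 + (m:ℝ≥0∞) * (k₀:ℝ≥0∞) := by push_cast; ring
        _ ≤ _ := by gcongr
  have hindm : ∀ k, Measurable ((A k).indicator (fun _ => (1:ℝ≥0∞))) :=
    fun k => measurable_const.indicator (hAmeasC k)
  have hSm : Measurable (fun ω => ∑' k, (A k).indicator (fun _ => (1:ℝ≥0∞)) ω) :=
    Measurable.ennreal_tsum hindm
  have hlint : ∫⁻ ω, (1 + (m:ℝ≥0∞) * ∑' k, (A k).indicator (fun _ => (1:ℝ≥0∞)) ω) ∂μ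
      = 1 + (m:ℝ≥0∞) * ∑' k, μ (A k) := by
    rw [lintegral_add_left measurable_const, lintegral_const_mul _ hSm,
      lintegral_tsum (fun k => (hindm k).aemeasurable)]
    have h1 : ∀ k, ∫⁻ ω, (A k).indicator (fun _ => (1:ℝ≥0∞)) ω ∂μ = μ (A k) := by
      intro k
      rw [lintegral_indicator_const (hAmeasC k), one_mul]
    simp only [h1, lintegral_const, measure_univ, mul_one]
  have hq : (m:ℝ) * ((f x₁ - fstar)/e)
      = (f x₁ - fstar) * m ^ 2 * σ ^ 2 / (ε ^ 2 * c * (1 - c))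
        + (f x₁ - fstar) * m / (c * (1 - c) * ε) := by
    rw [he, hη]
    have h1 : (1:ℝ) - c ≠ 0 := by linarith
    have h2 : ε ≠ 0 := ne_of_gt hε
    have h3 : c ≠ 0 := ne_of_gt hc0
    have h4 : (m:ℝ) * σ ^ 2 + ε ≠ 0 := ne_of_gt hden
    field_simp
  have hT12 : 0 ≤ (f x₁ - fstar) * m ^ 2 * σ ^ 2 / (ε ^ 2 * c * (1 - c))
      + (f x₁ - fstar) * m / (c * (1 - c) * ε) := by
    have := hF₁
    have h1c : (0:ℝ) < 1 - c := by linarith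
    positivity
  calc ∫⁻ ω, (τ ω : ℝ≥0∞) ∂μ
      ≤ ∫⁻ ω, (1 + (m:ℝ≥0∞) * ∑' k, (A k).indicator (fun _ => (1:ℝ≥0∞)) ω) ∂μ :=
        lintegral_mono hτle
    _ = 1 + (m:ℝ≥0∞) * ∑' k, μ (A k) := hlint
    _ ≤ 1 + (m:ℝ≥0∞) * ENNReal.ofReal ((f x₁ - fstar)/e) := by gcongr
    _ = 1 + ENNReal.ofReal ((m:ℝ) * ((f x₁ - fstar)/e)) := by
        rw [ENNReal.ofReal_mul (by positivity : (0:ℝ) ≤ (m:ℝ))]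
        simp
    _ ≤ ENNReal.ofReal (1/(1-c)) + ENNReal.ofReal ((m:ℝ) * ((f x₁ - fstar)/e)) := by
        gcongr
        rw [ENNReal.one_le_ofReal]
        rw [le_div_iff₀ (by linarith : (0:ℝ) < 1 - c)]
        linarith
    _ = ENNReal.ofReal ((f x₁ - fstar) * m ^ 2 * σ ^ 2 / (ε ^ 2 * c * (1 - c))
          + (f x₁ - fstar) * m / (c * (1 - c) * ε) + 1 / (1 - c)) := by
        rw [hq, ← ENNReal.ofReal_add
          (div_nonneg zero_le_one (by linarith)) hT12]
        congr 1
        ring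
end

section
/- For SVRG with early stopping: suppose f_T is bounded below by f*, and for each epoch s ≥ 1 there is a constant γ > 0 with ∑_{t=0}^{m-1} E[‖∇f_T(x_t^{s+1})‖² | F_{s-1}] ≤ (f_T(x_m^s) − E[f_T(x_m^{s+1}) | F_{s-1}])/γ. Define τ(ε) = inf{ s ≥ 1 : ‖∇f_T(x_0^{s+1})‖² ≤ ε }, where x_0^{s+1} = x_m^s. Then E[τ(ε)] ≤ 1 + (f_T(x_m^1) − f*)/(γ ε). -/
open MeasureTheory Finset ENNReal

theorem svrg_early_stopping_expected_epochs
    {Ω : Type*} {m0 : MeasurableSpace Ω} (μ : Measure Ω) [IsProbabilityMeasure μ]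
    (ℱ : Filtration ℕ m0)
    {d : ℕ} (fT : EuclideanSpace ℝ (Fin d) → ℝ)
    (fT' : EuclideanSpace ℝ (Fin d) → EuclideanSpace ℝ (Fin d))
    (hgrad : ∀ x, HasGradientAt fT (fT' x) x)
    (fstar : ℝ) (hlb : ∀ x, fstar ≤ fT x)
    (m : ℕ) (hm : 1 ≤ m)
    (γ : ℝ) (hγ : 0 < γ) (ε : ℝ) (hε : 0 < ε)
    -- `X s t` is the iterate `x_t^{s+1}` of epoch `s`, for `s ≥ 1`, `0 ≤ t ≤ m`.
    (X : ℕ → ℕ → Ω → EuclideanSpace ℝ (Fin d))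
    -- each epoch starts where the previous ended: `x_0^{s+2} = x_m^{s+1}`
    (hlink : ∀ s, 1 ≤ s → X (s + 1) 0 = X s m)
    -- the initial point `x_m^1 = x_0^2` is deterministic
    (x₁ : EuclideanSpace ℝ (Fin d)) (hinit : X 1 0 = fun _ => x₁)
    -- adaptedness and integrability
    (hmeas : ∀ s t, 1 ≤ s → t ≤ m → StronglyMeasurable[ℱ s] (X s t))
    (hint1 : ∀ s t, Integrable (fun ω => ‖fT' (X s t ω)‖ ^ 2) μ)
    (hint2 : ∀ s t, Integrable (fun ω => fT (X s t ω)) μ)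
    -- the per-epoch expected descent property
    (hdescent : ∀ s, 1 ≤ s → ∀ᵐ ω ∂μ,
      ∑ t ∈ Finset.range m, (μ[fun ω' => ‖fT' (X s t ω')‖ ^ 2|ℱ (s - 1)]) ω
        ≤ (fT (X s 0 ω) - (μ[fun ω' => fT (X s m ω')|ℱ (s - 1)]) ω) / γ)
    -- the stopping time: the first epoch `s ≥ 1` with `‖∇f_T(x_0^{s+1})‖² ≤ ε`
    (τ : Ω → ℕ∞)
    (hτ : ∀ ω, τ ω = sInf {n : ℕ∞ | ∃ s : ℕ, n = s ∧ 1 ≤ s ∧ ‖fT' (X s 0 ω)‖ ^ 2 ≤ ε}) :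
    ∫⁻ ω, (τ ω : ℝ≥0∞) ∂μ ≤ ENNReal.ofReal (1 + (fT x₁ - fstar) / (γ * ε)) := by
  classical
  set A : ℝ := (fT x₁ - fstar) / γ with hA
  have hfx₁ : fstar ≤ fT x₁ := hlb x₁
  have hA0 : 0 ≤ A := div_nonneg (by linarith) hγ.le
  -- Step 1: per-epoch bound on expectations
  have key1 : ∀ s : ℕ, 1 ≤ s →
      (∫ ω, ‖fT' (X s 0 ω)‖ ^ 2 ∂μ)
        ≤ ((∫ ω, fT (X s 0 ω) ∂μ) - ∫ ω, fT (X s m ω) ∂μ) / γ := by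
    intro s hs
    have hLHS_int : Integrable
        (fun ω => ∑ t ∈ Finset.range m,
          (μ[fun ω' => ‖fT' (X s t ω')‖ ^ 2|ℱ (s - 1)]) ω) μ :=
      integrable_finset_sum _ (fun t _ => integrable_condExp)
    have hRHS_int : Integrable
        (fun ω => (fT (X s 0 ω) - (μ[fun ω' => fT (X s m ω')|ℱ (s - 1)]) ω) / γ) μ :=
      ((hint2 s 0).sub integrable_condExp).div_const γ
    have hI := integral_mono_ae hLHS_int hRHS_int (hdescent s hs)
    rw [integral_finset_sum _ (fun t _ => integrable_condExp)] at hI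
    rw [Finset.sum_congr rfl (fun t _ => integral_condExp (ℱ.le (s - 1)))] at hI
    rw [integral_div, integral_sub (hint2 s 0) integrable_condExp,
      integral_condExp (ℱ.le (s - 1))] at hI
    refine le_trans ?_ hI
    exact Finset.single_le_sum
      (f := fun t => ∫ ω, ‖fT' (X s t ω)‖ ^ 2 ∂μ)
      (fun t _ => integral_nonneg fun ω => by positivity)
      (Finset.mem_range.mpr hm)
  -- Expected values of fT at epoch ends are at least fstar
  have hFstar : ∀ s t : ℕ, fstar ≤ ∫ ω, fT (X s t ω) ∂μ := by
    intro s t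
    calc fstar = ∫ _ω, fstar ∂μ := by simp
    _ ≤ _ := integral_mono (integrable_const _) (hint2 s t) fun ω => hlb _
  -- telescoping
  have T1 : ∀ N : ℕ, 1 ≤ N →
      ∑ k ∈ Finset.Icc 1 N, (∫ ω, ‖fT' (X k 0 ω)‖ ^ 2 ∂μ)
        ≤ (fT x₁ - ∫ ω, fT (X N m ω) ∂μ) / γ := by
    intro N hN
    induction N, hN using Nat.le_induction with
    | base =>
      have h := key1 1 le_rfl
      have h0 : (∫ ω, fT (X 1 0 ω) ∂μ) = fT x₁ := by rw [hinit]; simp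
      rw [h0] at h
      simpa using h
    | succ N hN ih =>
      rw [Finset.sum_Icc_succ_top (by omega)]
      have h := key1 (N + 1) (by omega)
      have hl : (∫ ω, fT (X (N + 1) 0 ω) ∂μ) = ∫ ω, fT (X N m ω) ∂μ := by
        rw [hlink N hN]
      rw [hl] at h
      have hadd := add_le_add ih h
      calc ∑ k ∈ Finset.Icc 1 N, (∫ ω, ‖fT' (X k 0 ω)‖ ^ 2 ∂μ)
            + (∫ ω, ‖fT' (X (N + 1) 0 ω)‖ ^ 2 ∂μ)
          ≤ (fT x₁ - ∫ ω, fT (X N m ω) ∂μ) / γ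
            + ((∫ ω, fT (X N m ω) ∂μ) - ∫ ω, fT (X (N + 1) m ω) ∂μ) / γ := hadd
        _ = (fT x₁ - ∫ ω, fT (X (N + 1) m ω) ∂μ) / γ := by ring
  have T2 : ∀ N : ℕ, ∑ k ∈ Finset.Icc 1 N, (∫ ω, ‖fT' (X k 0 ω)‖ ^ 2 ∂μ) ≤ A := by
    intro N
    rcases Nat.eq_zero_or_pos N with h0 | hN
    · simp [h0, hA0]
    · refine (T1 N hN).trans ?_
      rw [hA]
      exact (div_le_div_iff_of_pos_right hγ).mpr (by have := hFstar N m; linarith)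
  -- indicator functions for "gradient still large at the start of epoch k"
  set c : ℕ → Ω → ℝ≥0∞ :=
    fun k ω => if 1 ≤ k ∧ ε < ‖fT' (X k 0 ω)‖ ^ 2 then 1 else 0 with hc
  -- pointwise bound on τ
  have hτle : ∀ ω, (τ ω : ℝ≥0∞) ≤ 1 + ∑' k, c k ω := by
    intro ω
    have hmem : ∀ k : ℕ, 1 ≤ k → ‖fT' (X k 0 ω)‖ ^ 2 ≤ ε → τ ω ≤ (k : ℕ∞) := by
      intro k hk hle
      rw [hτ ω]
      exact sInf_le ⟨k, rfl, hk, hle⟩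
    rcases eq_or_ne (τ ω) ⊤ with htop | hfin
    · have hone : ∀ k : ℕ, 1 ≤ k → c k ω = 1 := by
        intro k hk
        have hbig : ¬ ‖fT' (X k 0 ω)‖ ^ 2 ≤ ε := by
          intro hle
          have h1 := hmem k hk hle
          rw [htop] at h1
          exact absurd h1 (by simp)
        simp [hc, hk, lt_of_not_ge hbig]
      have htsum : ∑' k, c k ω = ⊤ := by
        by_contra hne
        obtain ⟨n, hn⟩ := ENNReal.exists_nat_gt hne
        have hle2 : (n : ℝ≥0∞) ≤ ∑' k, c k ω := by
          calc (n : ℝ≥0∞) = ∑ k ∈ Finset.Icc 1 n, c k ω := by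
                rw [Finset.sum_congr rfl (fun k hk => hone k (Finset.mem_Icc.mp hk).1)]
                simp [Nat.card_Icc]
            _ ≤ ∑' k, c k ω := ENNReal.sum_le_tsum _
        exact absurd hn (not_lt.mpr hle2)
      rw [htop, htsum]
      simp
    · obtain ⟨n, hn⟩ : ∃ n : ℕ, (n : ℕ∞) = τ ω := by
        lift τ ω to ℕ using hfin with n hn
        exact ⟨n, rfl⟩
      rw [← hn]
      match n with
      | 0 => simp
      | (n + 1) =>
        have hone : ∀ k ∈ Finset.Icc 1 n, c k ω = 1 := by
          intro k hk
          obtain ⟨hk1, hkn⟩ := Finset.mem_Icc.mp hk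
          have hbig : ¬ ‖fT' (X k 0 ω)‖ ^ 2 ≤ ε := by
            intro hle
            have h1 := hmem k hk1 hle
            rw [← hn] at h1
            have h2 : (n + 1 : ℕ) ≤ k := by exact_mod_cast h1
            omega
          simp [hc, hk1, lt_of_not_ge hbig]
        have hge : (n : ℝ≥0∞) ≤ ∑' k, c k ω := by
          calc (n : ℝ≥0∞) = ∑ k ∈ Finset.Icc 1 n, c k ω := by
                rw [Finset.sum_congr rfl hone]
                simp [Nat.card_Icc]
            _ ≤ ∑' k, c k ω := ENNReal.sum_le_tsum _
        calc (((n + 1 : ℕ) : ℕ∞) : ℝ≥0∞) = 1 + (n : ℝ≥0∞) := by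
              rw [ENat.toENNReal_coe]
              push_cast
              ring
          _ ≤ 1 + ∑' k, c k ω := add_le_add_right hge 1
  -- a.e.-measurability of the indicators
  have hcmeas : ∀ k, AEMeasurable (c k) μ := by
    intro k
    by_cases hk : 1 ≤ k
    · have hg : AEMeasurable (fun ω => ‖fT' (X k 0 ω)‖ ^ 2) μ := (hint1 k 0).aemeasurable
      have houter : Measurable (fun x : ℝ => if ε < x then (1 : ℝ≥0∞) else 0) :=
        Measurable.ite measurableSet_Ioi measurable_const measurable_const
      have hcomp := houter.comp_aemeasurable hg
      have heq : c k = fun ω => if ε < ‖fT' (X k 0 ω)‖ ^ 2 then (1 : ℝ≥0∞) else 0 := by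
        funext ω; simp [hc, hk]
      rw [heq]
      exact hcomp
    · have heq : c k = fun _ => (0 : ℝ≥0∞) := by funext ω; simp [hc, hk]
      rw [heq]
      exact aemeasurable_const
  have hεne : ENNReal.ofReal ε ≠ 0 := (ENNReal.ofReal_pos.mpr hε).ne'
  -- Markov-type bound for each indicator
  have hck : ∀ k : ℕ, 1 ≤ k → ∫⁻ ω, c k ω ∂μ ≤
      ENNReal.ofReal (∫ ω, ‖fT' (X k 0 ω)‖ ^ 2 ∂μ) * (ENNReal.ofReal ε)⁻¹ := by
    intro k hk
    have hptw : ∀ ω, c k ω ≤ ENNReal.ofReal (‖fT' (X k 0 ω)‖ ^ 2) * (ENNReal.ofReal ε)⁻¹ := by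
      intro ω
      simp only [hc]
      split_ifs with h
      · rw [← div_eq_mul_inv]
        rw [ENNReal.le_div_iff_mul_le (Or.inl hεne) (Or.inl ENNReal.ofReal_ne_top), one_mul]
        exact ENNReal.ofReal_le_ofReal h.2.le
      · exact zero_le
    calc ∫⁻ ω, c k ω ∂μ
        ≤ ∫⁻ ω, ENNReal.ofReal (‖fT' (X k 0 ω)‖ ^ 2) * (ENNReal.ofReal ε)⁻¹ ∂μ :=
          lintegral_mono hptw
      _ = (∫⁻ ω, ENNReal.ofReal (‖fT' (X k 0 ω)‖ ^ 2) ∂μ) * (ENNReal.ofReal ε)⁻¹ :=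
          lintegral_mul_const' _ _ (ENNReal.inv_ne_top.mpr hεne)
      _ = ENNReal.ofReal (∫ ω, ‖fT' (X k 0 ω)‖ ^ 2 ∂μ) * (ENNReal.ofReal ε)⁻¹ := by
          rw [← ofReal_integral_eq_lintegral_ofReal (hint1 k 0)
            (Filter.Eventually.of_forall fun ω => by positivity)]
  -- bound the partial sums
  have hsum_bound : ∀ N : ℕ, ∑ k ∈ Finset.range N, ∫⁻ ω, c k ω ∂μ ≤
      ENNReal.ofReal A * (ENNReal.ofReal ε)⁻¹ := by
    intro N
    have step1 : ∑ k ∈ Finset.range N, ∫⁻ ω, c k ω ∂μ ≤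
        ∑ k ∈ Finset.range N,
          (if 1 ≤ k then ENNReal.ofReal (∫ ω, ‖fT' (X k 0 ω)‖ ^ 2 ∂μ) else 0)
            * (ENNReal.ofReal ε)⁻¹ := by
      refine Finset.sum_le_sum fun k _ => ?_
      by_cases hk : 1 ≤ k
      · simpa [hk] using hck k hk
      · have heq : c k = fun _ => (0 : ℝ≥0∞) := by funext ω; simp [hc, hk]
        simp [heq, hk]
    refine step1.trans ?_
    rw [← Finset.sum_mul]
    refine mul_le_mul_left ?_ _
    calc ∑ k ∈ Finset.range N,
          (if 1 ≤ k then ENNReal.ofReal (∫ ω, ‖fT' (X k 0 ω)‖ ^ 2 ∂μ) else 0)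
        = ∑ k ∈ (Finset.range N).filter (fun k => 1 ≤ k),
            ENNReal.ofReal (∫ ω, ‖fT' (X k 0 ω)‖ ^ 2 ∂μ) := (Finset.sum_filter _ _).symm
      _ ≤ ∑ k ∈ Finset.Icc 1 N, ENNReal.ofReal (∫ ω, ‖fT' (X k 0 ω)‖ ^ 2 ∂μ) := by
          refine Finset.sum_le_sum_of_subset fun k hkmem => ?_
          simp only [Finset.mem_filter, Finset.mem_range] at hkmem
          exact Finset.mem_Icc.mpr ⟨hkmem.2, by omega⟩
      _ = ENNReal.ofReal (∑ k ∈ Finset.Icc 1 N, ∫ ω, ‖fT' (X k 0 ω)‖ ^ 2 ∂μ) :=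
          (ENNReal.ofReal_sum_of_nonneg fun k _ =>
            integral_nonneg fun ω => by positivity).symm
      _ ≤ ENNReal.ofReal A := ENNReal.ofReal_le_ofReal (T2 N)
  -- put everything together
  calc ∫⁻ ω, (τ ω : ℝ≥0∞) ∂μ
      ≤ ∫⁻ ω, (1 + ∑' k, c k ω) ∂μ := lintegral_mono hτle
    _ = (∫⁻ _ω, (1 : ℝ≥0∞) ∂μ) + ∫⁻ ω, ∑' k, c k ω ∂μ :=
        lintegral_add_left measurable_const _
    _ = 1 + ∑' k, ∫⁻ ω, c k ω ∂μ := by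
        rw [lintegral_tsum hcmeas]
        simp
    _ ≤ 1 + ENNReal.ofReal A * (ENNReal.ofReal ε)⁻¹ :=
        add_le_add_right (Summable.tsum_le_of_sum_range_le ENNReal.summable hsum_bound) 1
    _ = ENNReal.ofReal (1 + (fT x₁ - fstar) / (γ * ε)) := by
        rw [← div_eq_mul_inv, ← ENNReal.ofReal_div_of_pos hε, hA, div_div,
          ← ENNReal.ofReal_one,
          ← ENNReal.ofReal_add zero_le_one
            (div_nonneg (by linarith) (by positivity))]
end
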